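/- Every connected graph G has a simple extremal TMC-coloring; that is, a TMC-coloring of G using exactly tmc(G) colors in which, for any two nontrivial colors c and d, the color trees T_c and T_d intersect in at most one vertex. -/

import Mathlib

open SimpleGraph

/-- A walk in a total-colored graph is *total monochromatic* if all of its edges and
internal vertices have the same color. -/
def IsTotalMonoWalk {V : Type*} {G : SimpleGraph V} (ce : Sym2 V → ℕ) (cv : V → ℕ)
    {u v : V} (w : G.Walk u v) : Prop :=
  ∃ c, (∀ e ∈ w.edges, ce e = c) ∧ ∀ x ∈ w.support.tail.dropLast, cv x = c

/-- A total coloring (edge coloring `ce`, vertex coloring `cv`) of `G` is a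
*TMC-coloring* if any two vertices are connected by a total monochromatic path. -/
def IsTMCColoring {V : Type*} (G : SimpleGraph V) (ce : Sym2 V → ℕ) (cv : V → ℕ) : Prop :=
  ∀ u v : V, u ≠ v → ∃ w : G.Walk u v, w.IsPath ∧ IsTotalMonoWalk ce cv w

/-- The number of colors used by a total coloring of `G`:
colors appearing on edges of `G` together with colors appearing on vertices. -/
noncomputable def colorsUsed {V : Type*} (G : SimpleGraph V) (ce : Sym2 V → ℕ) (cv : V → ℕ) : ℕ :=
  (ce '' G.edgeSet ∪ Set.range cv).ncard

/-- The total monochromatic connection number `tmc G`: the maximum number of colors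
used in a TMC-coloring of `G`. -/
noncomputable def tmc {V : Type*} [Fintype V] (G : SimpleGraph V) : ℕ :=
  sSup {k | ∃ ce cv, IsTMCColoring G ce cv ∧ colorsUsed G ce cv = k}

namespace TMC

variable {V : Type*}

/-- The set of used colors. -/
def used {V : Type*} (G : SimpleGraph V) (ce : Sym2 V → ℕ) (cv : V → ℕ) : Set ℕ :=
  ce '' G.edgeSet ∪ Set.range cv

lemma colorsUsed_eq {G : SimpleGraph V} (ce : Sym2 V → ℕ) (cv : V → ℕ) :
    colorsUsed G ce cv = (used G ce cv).ncard := rfl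

lemma used_finite [Fintype V] (G : SimpleGraph V) (ce : Sym2 V → ℕ) (cv : V → ℕ) :
    (used G ce cv).Finite := by
  classical
  exact ((Set.toFinite G.edgeSet).image ce).union (Set.finite_range cv)

/-- A walk witnessing a total monochromatic connection, with endpoint allowances. -/
def GoodW {V : Type*} {G : SimpleGraph V} (ce : Sym2 V → ℕ) (cv : V → ℕ) (c : ℕ) (x y : V)
    {a b : V} (w : G.Walk a b) : Prop :=
  (∀ e ∈ w.edges, ce e = c) ∧ (∀ z ∈ w.support, z = x ∨ z = y ∨ cv z = c)

def Linked {V : Type*} (G : SimpleGraph V) (ce : Sym2 V → ℕ) (cv : V → ℕ) (c : ℕ)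
    (x y : V) : Prop :=
  ∃ w : G.Walk x y, GoodW ce cv c x y w

lemma list_mem_dropLast_or {α : Type*} {l : List α} (h : l ≠ []) {z : α} (hz : z ∈ l) :
    z ∈ l.dropLast ∨ z = l.getLast h := by
  conv at hz => rw [← List.dropLast_append_getLast h]
  rcases List.mem_append.1 hz with h1 | h1
  · exact Or.inl h1
  · simp at h1; exact Or.inr h1

lemma list_getLast_not_mem_dropLast {α : Type*} {l : List α} (h : l ≠ []) (hnd : l.Nodup) :
    l.getLast h ∉ l.dropLast := by
  intro hmem
  have := List.dropLast_append_getLast h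
  rw [← this] at hnd
  rcases List.nodup_append.1 hnd with ⟨-, -, hdisj⟩
  exact hdisj _ hmem _ (by simp) rfl

lemma getLast?_cons_ne {α : Type*} {a : α} {t : List α} (ht : t ≠ []) :
    (a :: t).getLast? = t.getLast? := by
  cases t with
  | nil => simp at ht
  | cons b l => simp [List.getLast?_cons_cons]

lemma walk_tail_getLast {G : SimpleGraph V} {x y : V} (w : G.Walk x y)
    (h : w.support.tail ≠ []) : w.support.tail.getLast h = y := by
  have h1 : w.support.getLast? = some y := by
    rw [List.getLast?_eq_getLast w.support_ne_nil]
    exact congrArg some w.getLast_support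
  rw [w.support_eq_cons, getLast?_cons_ne h, List.getLast?_eq_getLast h] at h1
  exact Option.some.inj h1

/-- From a good walk we can extract a total monochromatic path. -/
lemma linked_to_path {G : SimpleGraph V} {ce : Sym2 V → ℕ} {cv : V → ℕ} {c : ℕ} {x y : V}
    (hxy : x ≠ y) (h : Linked G ce cv c x y) :
    ∃ w : G.Walk x y, w.IsPath ∧ IsTotalMonoWalk ce cv w := by
  classical
  obtain ⟨w, hedges, hsupp⟩ := h
  refine ⟨w.bypass, w.bypass_isPath, c, ?_, ?_⟩
  · exact fun e he => hedges e (w.edges_bypass_subset he)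
  · intro z hz
    have hzsup : z ∈ w.bypass.support := by
      have h1 : z ∈ w.bypass.support.tail := List.mem_of_mem_dropLast hz
      exact List.mem_of_mem_tail h1
    have hnd := w.bypass_isPath.support_nodup
    have hcons := w.bypass.support_eq_cons
    -- z ≠ x
    have hzx : z ≠ x := by
      intro rfl'
      subst rfl'
      rw [hcons] at hnd
      have : z ∉ w.bypass.support.tail := (List.nodup_cons.1 hnd).1
      exact this (List.mem_of_mem_dropLast hz)
    -- z ≠ y
    have htne : w.bypass.support.tail ≠ [] := by
      intro h0
      rw [h0] at hz; simp at hz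
    have hlast : w.bypass.support.tail.getLast htne = y := walk_tail_getLast _ htne
    have hndt : w.bypass.support.tail.Nodup := by
      rw [hcons] at hnd; exact (List.nodup_cons.1 hnd).2
    have hynot : y ∉ w.bypass.support.tail.dropLast := by
      have h3 := list_getLast_not_mem_dropLast htne hndt
      rw [hlast] at h3
      exact h3
    have hzy : z ≠ y := by
      intro h0; rw [h0] at hz; exact hynot hz
    rcases hsupp z (w.support_bypass_subset hzsup) with h1 | h1 | h1
    · exact absurd h1 hzx
    · exact absurd h1 hzy
    · exact h1

/-- From a total monochromatic path we get a good walk. -/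
lemma path_to_linked {G : SimpleGraph V} {ce : Sym2 V → ℕ} {cv : V → ℕ} {x y : V}
    {w : G.Walk x y} (hmono : IsTotalMonoWalk ce cv w) :
    ∃ c, Linked G ce cv c x y := by
  obtain ⟨c, hedges, hint⟩ := hmono
  refine ⟨c, w, hedges, ?_⟩
  intro z hz
  rw [w.support_eq_cons] at hz
  rcases List.mem_cons.1 hz with h1 | h1
  · exact Or.inl h1
  by_cases hne : w.support.tail = []
  · rw [hne] at h1; simp at h1
  rcases list_mem_dropLast_or hne h1 with h2 | h2
  · exact Or.inr (Or.inr (hint z h2))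
  · right; left
    rw [h2]
    exact walk_tail_getLast _ hne

lemma isTMC_iff_linked {G : SimpleGraph V} {ce : Sym2 V → ℕ} {cv : V → ℕ} :
    IsTMCColoring G ce cv ↔ ∀ x y : V, x ≠ y → ∃ c, Linked G ce cv c x y := by
  constructor
  · intro h x y hxy
    obtain ⟨w, _, hmono⟩ := h x y hxy
    exact path_to_linked hmono
  · intro h x y hxy
    obtain ⟨c, hl⟩ := h x y hxy
    exact linked_to_path hxy hl

end TMC

namespace TMC

variable {V : Type*}

section Basic

variable [Fintype V]

def TMCset (G : SimpleGraph V) : Set ℕ :=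
  {k | ∃ ce cv, IsTMCColoring G ce cv ∧ colorsUsed G ce cv = k}

lemma tmc_def (G : SimpleGraph V) : tmc G = sSup (TMCset G) := rfl

lemma TMCset_bddAbove (G : SimpleGraph V) : BddAbove (TMCset G) := by
  classical
  refine ⟨Fintype.card (Sym2 V) + Fintype.card V, ?_⟩
  rintro k ⟨ce, cv, -, rfl⟩
  have h1 : colorsUsed G ce cv ≤ (ce '' G.edgeSet).ncard + (Set.range cv).ncard :=
    Set.ncard_union_le _ _
  have h2 : (ce '' G.edgeSet).ncard ≤ Fintype.card (Sym2 V) := by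
    calc (ce '' G.edgeSet).ncard ≤ G.edgeSet.ncard := Set.ncard_image_le (Set.toFinite _)
    _ ≤ (Set.univ : Set (Sym2 V)).ncard := Set.ncard_le_ncard (Set.subset_univ _) (Set.toFinite _)
    _ = Fintype.card (Sym2 V) := by rw [Set.ncard_univ, Nat.card_eq_fintype_card]
  have h3 : (Set.range cv).ncard ≤ Fintype.card V := by
    calc (Set.range cv).ncard ≤ (Set.univ : Set V).ncard := by
          have : Set.range cv = cv '' Set.univ := by simp [Set.image_univ]
          rw [this]
          exact Set.ncard_image_le (Set.toFinite _)
    _ = Fintype.card V := by rw [Set.ncard_univ, Nat.card_eq_fintype_card]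
  omega

omit [Fintype V] in
lemma TMCset_nonempty {G : SimpleGraph V} (hG : G.Connected) : (TMCset G).Nonempty := by
  classical
  refine ⟨_, (fun _ => 0), (fun _ => 0), ?_, rfl⟩
  intro u v huv
  obtain ⟨w⟩ := hG.preconnected u v
  exact ⟨w.bypass, w.bypass_isPath, 0, by simp, by simp⟩

lemma tmc_mem {G : SimpleGraph V} (hG : G.Connected) : tmc G ∈ TMCset G :=
  Nat.sSup_mem (TMCset_nonempty hG) (TMCset_bddAbove G)

lemma le_tmc {G : SimpleGraph V} {ce : Sym2 V → ℕ} {cv : V → ℕ}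
    (h : IsTMCColoring G ce cv) : colorsUsed G ce cv ≤ tmc G :=
  le_csSup (TMCset_bddAbove G) ⟨ce, cv, h, rfl⟩

end Basic

/-- Edges of color `a`. -/
def Ec (G : SimpleGraph V) (ce : Sym2 V → ℕ) (a : ℕ) : Set (Sym2 V) :=
  {e ∈ G.edgeSet | ce e = a}

/-- Vertices touched by an edge of color `a`. -/
def Vt (G : SimpleGraph V) (ce : Sym2 V → ℕ) (a : ℕ) : Set V :=
  {v | ∃ e ∈ G.edgeSet, ce e = a ∧ v ∈ e}

/-- Heavy (nontrivial) colors: at least two edges. -/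
def heavy (G : SimpleGraph V) (ce : Sym2 V → ℕ) : Set ℕ :=
  {a | 2 ≤ (Ec G ce a).ncard}

lemma heavy_subset_image {G : SimpleGraph V} {ce : Sym2 V → ℕ} :
    heavy G ce ⊆ ce '' G.edgeSet := by
  intro a ha
  have h2 : (Ec G ce a).Nonempty := by
    rcases Set.eq_empty_or_nonempty (Ec G ce a) with h | h
    · exfalso; have := ha; rw [heavy, Set.mem_setOf_eq, h] at this; simp at this
    · exact h
  obtain ⟨e, he, hce⟩ := h2
  exact ⟨e, he, hce⟩

lemma mem_Vt {G : SimpleGraph V} {ce : Sym2 V → ℕ} {a : ℕ} {v : V} :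
    v ∈ Vt G ce a ↔ ∃ e ∈ Ec G ce a, v ∈ e := by
  constructor
  · rintro ⟨e, he, hce, hv⟩; exact ⟨e, ⟨he, hce⟩, hv⟩
  · rintro ⟨e, ⟨he, hce⟩, hv⟩; exact ⟨e, he, hce, hv⟩


lemma sym2_eq_of_mem {e : Sym2 V} {u v : V} (hu : u ∈ e) (hv : v ∈ e) (huv : u ≠ v) :
    e = s(u, v) := ((Sym2.mem_and_mem_iff huv).1 ⟨hu, hv⟩)

section Walks

variable {G : SimpleGraph V} {ce : Sym2 V → ℕ} {cv : V → ℕ}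

/-- Relation on edges of color `c`: sharing a `c`-colored vertex. -/
def Rel (G : SimpleGraph V) (ce : Sym2 V → ℕ) (cv : V → ℕ) (c : ℕ) (e f : Sym2 V) : Prop :=
  e ∈ Ec G ce c ∧ f ∈ Ec G ce c ∧ (e = f ∨ ∃ w, cv w = c ∧ w ∈ e ∧ w ∈ f)

/-- One-edge good walk. -/
lemma edge_walk {c : ℕ} {f : Sym2 V} (hf : f ∈ Ec G ce c) {u v : V} (hu : u ∈ f)
    (hv : v ∈ f) :
    ∃ w : G.Walk u v, (∀ e' ∈ w.edges, e' ∈ Ec G ce c) ∧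
      (∀ z ∈ w.support, z = u ∨ z = v) := by
  by_cases huv : u = v
  · subst huv; exact ⟨Walk.nil, by simp, by simp⟩
  · have heq : f = s(u, v) := sym2_eq_of_mem hu hv huv
    have hadj : G.Adj u v := by
      have := hf.1; rw [heq] at this; exact this
    refine ⟨Walk.cons hadj Walk.nil, ?_, ?_⟩
    · intro e' he'
      simp only [Walk.edges_cons, Walk.edges_nil, List.mem_singleton] at he'
      rw [he', ← heq]; exact hf
    · intro z hz
      simp only [Walk.support_cons, Walk.support_nil, List.mem_cons,
        List.mem_singleton, List.not_mem_nil, or_false] at hz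
      tauto

lemma chain_walk {c : ℕ} {e f : Sym2 V}
    (h : Relation.ReflTransGen (Rel G ce cv c) e f) (he : e ∈ Ec G ce c)
    {u : V} (hu : u ∈ e) :
    ∀ (_ : f ∈ Ec G ce c) {v : V}, v ∈ f →
    ∃ w : G.Walk u v, (∀ e' ∈ w.edges, e' ∈ Ec G ce c) ∧
      (∀ z ∈ w.support, z = u ∨ z = v ∨ cv z = c) := by
  induction h with
  | refl =>
    intro hf v hv
    obtain ⟨w, hwe, hws⟩ := edge_walk hf hu hv
    exact ⟨w, hwe, fun z hz => by rcases hws z hz with h1 | h1 <;> tauto⟩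
  | tail hchain hrel ih =>
    rename_i g f'
    intro hf' v hv
    have hg : g ∈ Ec G ce c := hrel.1
    rcases hrel.2.2 with heq | ⟨w0, hw0c, hw0g, hw0f⟩
    · subst heq
      exact ih hg hv
    · obtain ⟨w1, hw1e, hw1s⟩ := ih hg hw0g
      obtain ⟨w2, hw2e, hw2s⟩ := edge_walk hf' hw0f hv
      refine ⟨w1.append w2, ?_, ?_⟩
      · intro e' he'
        rw [Walk.edges_append] at he'
        rcases List.mem_append.1 he' with h1 | h1
        · exact hw1e e' h1
        · exact hw2e e' h1
      · intro z hz
        rw [Walk.support_append] at hz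
        rcases List.mem_append.1 hz with h1 | h1
        · rcases hw1s z h1 with h2 | h2 | h2
          · exact Or.inl h2
          · exact Or.inr (Or.inr (h2 ▸ hw0c))
          · exact Or.inr (Or.inr h2)
        · rcases hw2s z (List.mem_of_mem_tail h1) with h2 | h2
          · exact Or.inr (Or.inr (h2 ▸ hw0c))
          · exact Or.inr (Or.inl h2)

lemma splice {A : Set ℕ} {D : Set (Sym2 V)}
    (detour : ∀ a b : V, s(a, b) ∈ D → ∃ d : G.Walk a b,
      (∀ e ∈ d.edges, ce e ∈ A ∧ e ∉ D) ∧ (∀ z ∈ d.support, z = a ∨ z = b ∨ cv z ∈ A)) :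
    ∀ {a b : V} (w : G.Walk a b), (∀ e ∈ w.edges, ce e ∈ A) →
      ∃ w' : G.Walk a b, (∀ e ∈ w'.edges, ce e ∈ A ∧ e ∉ D) ∧
        (∀ z ∈ w'.support, z ∈ w.support ∨ cv z ∈ A) := by
  intro a b w
  induction w with
  | nil => exact fun _ => ⟨Walk.nil, by simp, by simp⟩
  | @cons u x b hadj rest ih =>
    intro hedges
    obtain ⟨w', hw'e, hw's⟩ := ih (fun e he => hedges e (by simp [he]))
    by_cases hD : s(u, x) ∈ D
    · obtain ⟨d, hde, hds⟩ := detour u x hD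
      refine ⟨d.append w', ?_, ?_⟩
      · intro e he
        rw [Walk.edges_append] at he
        rcases List.mem_append.1 he with h1 | h1
        · exact hde e h1
        · exact hw'e e h1
      · intro z hz
        rw [Walk.support_append] at hz
        rcases List.mem_append.1 hz with h1 | h1
        · rcases hds z h1 with h2 | h2 | h2
          · subst h2; exact Or.inl (by simp)
          · subst h2; exact Or.inl (by simp [Walk.support_cons])
          · exact Or.inr h2
        · have h2 : z ∈ w'.support := List.mem_of_mem_tail h1
          rcases hw's z h2 with h3 | h3
          · exact Or.inl (by simp [Walk.support_cons, h3])
          · exact Or.inr h3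
    · refine ⟨Walk.cons hadj w', ?_, ?_⟩
      · intro e he
        simp only [Walk.edges_cons] at he
        rcases List.mem_cons.1 he with h1 | h1
        · subst h1
          exact ⟨hedges _ (by simp), hD⟩
        · exact hw'e e h1
      · intro z hz
        simp only [Walk.support_cons] at hz
        rcases List.mem_cons.1 hz with h1 | h1
        · exact Or.inl (by simp [h1])
        · rcases hw's z h1 with h2 | h2
          · exact Or.inl (by simp [Walk.support_cons, h2])
          · exact Or.inr h2

end Walks


section Move

variable [Fintype V] {G : SimpleGraph V} {ce : Sym2 V → ℕ} {cv : V → ℕ}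

lemma ncard_two_nonempty {α : Type*} {s : Set α} (h : 2 ≤ s.ncard) : s.Nonempty := by
  rcases Set.eq_empty_or_nonempty s with h0 | h0
  · rw [h0] at h; simp at h
  · exact h0

/-- The fundamental exchange move: merge the colors of `A` into `c`, give fresh
colors to the edges of `D`. -/
lemma move (htmc : IsTMCColoring G ce cv)
    (hext : colorsUsed G ce cv = tmc G)
    (A : Finset ℕ) (c : ℕ) (hcA : c ∈ A)
    (D : Finset (Sym2 V))
    (hDE : ∀ e ∈ D, e ∈ G.edgeSet)
    (hDA : ∀ e ∈ D, ce e ∈ A)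
    (hDc : ∀ e ∈ D, ce e ≠ c)
    (hc_used : ∃ e ∈ G.edgeSet, ce e = c)
    (hcard : A.card = D.card + 1)
    (detour : ∀ a b : V, s(a, b) ∈ D → ∃ d : G.Walk a b,
      (∀ e ∈ d.edges, ce e ∈ (A : Set ℕ) ∧ e ∉ (D : Set (Sym2 V))) ∧
      (∀ z ∈ d.support, z = a ∨ z = b ∨ cv z ∈ (A : Set ℕ))) :
    ∃ (ce' : Sym2 V → ℕ) (cv' : V → ℕ), IsTMCColoring G ce' cv' ∧
      colorsUsed G ce' cv' = tmc G ∧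
      heavy G ce' ⊆ (heavy G ce \ (A : Set ℕ)) ∪ {c} := by
  classical
  obtain ⟨N, hN⟩ := (used_finite G ce cv).bddAbove
  obtain ⟨ι, hι⟩ := exists_injective_nat (Sym2 V)
  set fr : Sym2 V → ℕ := fun e => N + 1 + ι e with hfr
  set ce' : Sym2 V → ℕ := fun e => if e ∈ D then fr e else if ce e ∈ A then c else ce e
    with hce'
  set cv' : V → ℕ := fun v => if cv v ∈ A then c else cv v with hcv'
  have hcN : c ≤ N := by
    obtain ⟨e0, he0, hc0⟩ := hc_used
    exact hN (Or.inl ⟨e0, he0, hc0⟩)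
  have husedN : ∀ a ∈ used G ce cv, a ≤ N := fun a ha => hN ha
  -- TMC for the new coloring
  have htmc' : IsTMCColoring G ce' cv' := by
    rw [isTMC_iff_linked]
    intro x y hxy
    obtain ⟨c₀, w, hwe, hws⟩ := (isTMC_iff_linked.1 htmc) x y hxy
    by_cases hc₀ : c₀ ∈ A
    · obtain ⟨w', hw'e, hw's⟩ :=
        splice (A := (A : Set ℕ)) (D := (D : Set (Sym2 V))) detour w
          (fun e he => by rw [hwe e he]; exact_mod_cast hc₀)
      refine ⟨c, w', ?_, ?_⟩
      · intro e he
        obtain ⟨h1, h2⟩ := hw'e e he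
        have h2' : e ∉ D := by exact_mod_cast h2
        have h1' : ce e ∈ A := by exact_mod_cast h1
        simp only [hce', if_neg h2', if_pos h1']
      · intro z hz
        rcases hw's z hz with h1 | h1
        · rcases hws z h1 with h2 | h2 | h2
          · exact Or.inl h2
          · exact Or.inr (Or.inl h2)
          · right; right
            have : cv z ∈ A := h2 ▸ hc₀
            simp only [hcv', if_pos this]
        · right; right
          have : cv z ∈ A := by exact_mod_cast h1
          simp only [hcv', if_pos this]
    · refine ⟨c₀, w, ?_, ?_⟩
      · intro e he
        have h1 : ce e = c₀ := hwe e he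
        have h2 : e ∉ D := fun hD => hc₀ (h1 ▸ hDA e hD)
        simp only [hce', if_neg h2, h1, if_neg hc₀]
      · intro z hz
        rcases hws z hz with h2 | h2 | h2
        · exact Or.inl h2
        · exact Or.inr (Or.inl h2)
        · right; right
          have : cv z ∉ A := h2 ▸ hc₀
          simp only [hcv', if_neg this, h2]
  -- counting
  have hsub1 : (used G ce cv \ (A : Set ℕ)) ∪ {c} ⊆ used G ce' cv' := by
    rintro a (⟨ha, haA⟩ | ha)
    · rcases ha with ⟨e, he, hcea⟩ | ⟨v, hva⟩
      · left
        refine ⟨e, he, ?_⟩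
        have h2 : e ∉ D := fun hD => haA (hcea ▸ hDA e hD)
        have h3 : ce e ∉ A := hcea ▸ haA
        simp only [hce', if_neg h2]
        rw [hcea, if_neg (show a ∉ A from fun h => haA (by exact_mod_cast h))]
      · right
        refine ⟨v, ?_⟩
        have h3 : cv v ∉ A := hva ▸ haA
        simp only [hcv', if_neg h3, hva]
    · left
      simp only [Set.mem_singleton_iff] at ha
      obtain ⟨e0, he0, hc0⟩ := hc_used
      refine ⟨e0, he0, ?_⟩
      have h2 : e0 ∉ D := fun hD => hDc e0 hD hc0
      simp only [hce', if_neg h2, hc0, if_pos hcA, ha]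
  have hsub2 : (fr '' (D : Set (Sym2 V))) ⊆ used G ce' cv' := by
    rintro a ⟨e, he, rfl⟩
    have heD : e ∈ D := he
    exact Or.inl ⟨e, hDE e heD, by simp only [hce', if_pos heD]⟩
  have hdisj : Disjoint ((used G ce cv \ (A : Set ℕ)) ∪ {c}) (fr '' (D : Set (Sym2 V))) := by
    rw [Set.disjoint_left]
    rintro a ha ⟨e, -, heq⟩
    have haN : a ≤ N := by
      rcases ha with ⟨ha, -⟩ | ha
      · exact husedN a ha
      · simp only [Set.mem_singleton_iff] at ha; exact ha ▸ hcN
    rw [← heq] at haN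
    simp only [hfr] at haN
    omega
  have hcount1 : (used G ce cv).ncard ≤ (used G ce cv \ (A : Set ℕ)).ncard + A.card := by
    have h1 : used G ce cv ⊆ (used G ce cv \ (A : Set ℕ)) ∪ (A : Set ℕ) := by
      intro a ha
      by_cases h : a ∈ (A : Set ℕ)
      · exact Or.inr h
      · exact Or.inl ⟨ha, h⟩
    calc (used G ce cv).ncard
        ≤ ((used G ce cv \ (A : Set ℕ)) ∪ (A : Set ℕ)).ncard :=
          Set.ncard_le_ncard h1 (((used_finite G ce cv).diff).union (A.finite_toSet))
      _ ≤ (used G ce cv \ (A : Set ℕ)).ncard + ((A : Set ℕ)).ncard := Set.ncard_union_le _ _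
      _ = (used G ce cv \ (A : Set ℕ)).ncard + A.card := by rw [Set.ncard_coe_finset]
  have hge : tmc G ≤ colorsUsed G ce' cv' := by
    have h1 : ((used G ce cv \ (A : Set ℕ)) ∪ {c}).ncard
        = (used G ce cv \ (A : Set ℕ)).ncard + 1 := by
      rw [Set.union_singleton]
      exact Set.ncard_insert_of_notMem (fun h => h.2 (by exact_mod_cast hcA))
        ((used_finite G ce cv).diff)
    have h2 : (fr '' (D : Set (Sym2 V))).ncard = D.card := by
      rw [Set.ncard_image_of_injective _ (fun a b hab => by
        simp only [hfr] at hab; exact hι (by omega))]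
      rw [Set.ncard_coe_finset]
    have h3 : (((used G ce cv \ (A : Set ℕ)) ∪ {c}) ∪ (fr '' (D : Set (Sym2 V)))).ncard
        = (used G ce cv \ (A : Set ℕ)).ncard + 1 + D.card := by
      rw [Set.ncard_union_eq hdisj
        ((((used_finite G ce cv).diff).union (Set.finite_singleton c)))
        (((D.finite_toSet).image fr)), h1, h2]
    have h4 : (((used G ce cv \ (A : Set ℕ)) ∪ {c}) ∪ (fr '' (D : Set (Sym2 V)))).ncard
        ≤ colorsUsed G ce' cv' := by
      rw [colorsUsed_eq]
      exact Set.ncard_le_ncard (Set.union_subset hsub1 hsub2) (used_finite G ce' cv')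
    have h5 : tmc G = (used G ce cv).ncard := by rw [← hext]; rfl
    omega
  have hle : colorsUsed G ce' cv' ≤ tmc G := le_tmc htmc'
  refine ⟨ce', cv', htmc', le_antisymm hle hge, ?_⟩
  -- heavy colors
  intro a ha
  by_cases hac : a = c
  · exact Or.inr (by simp [hac])
  left
  have h2 : 2 ≤ (Ec G ce' a).ncard := ha
  obtain ⟨e1, he1E, he1⟩ := ncard_two_nonempty h2
  by_cases hD1 : e1 ∈ D
  · exfalso
    have ha_eq : a = fr e1 := by
      simp only [hce', if_pos hD1] at he1; exact he1.symm
    have hsub : Ec G ce' a ⊆ {e1} := by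
      rintro e ⟨heE, hea⟩
      by_cases hD : e ∈ D
      · simp only [hce', if_pos hD] at hea
        have : e = e1 := by
          apply hι
          have : fr e = fr e1 := by rw [hea, ← ha_eq]
          simp only [hfr] at this; omega
        simp [this]
      · exfalso
        have haN : a ≤ N := by
          by_cases hA : ce e ∈ A
          · simp only [hce', if_neg hD, if_pos hA] at hea
            exact hea ▸ hcN
          · simp only [hce', if_neg hD, if_neg hA] at hea
            exact hea ▸ husedN _ (Or.inl ⟨e, heE, rfl⟩)
        rw [ha_eq] at haN
        simp only [hfr] at haN
        omega
    have := Set.ncard_le_ncard hsub (Set.finite_singleton e1)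
    rw [Set.ncard_singleton] at this
    omega
  · by_cases hA1 : ce e1 ∈ A
    · exfalso
      simp only [hce', if_neg hD1, if_pos hA1] at he1
      exact hac he1.symm
    · have ha_eq : ce e1 = a := by
        simp only [hce', if_neg hD1, if_neg hA1] at he1; exact he1
      have haA : a ∉ (A : Set ℕ) := by
        intro h
        exact hA1 (by rw [ha_eq]; exact_mod_cast h)
      have hsub : Ec G ce' a ⊆ Ec G ce a := by
        rintro e ⟨heE, hea⟩
        refine ⟨heE, ?_⟩
        by_cases hD : e ∈ D
        · exfalso
          simp only [hce', if_pos hD] at hea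
          have h1 : a ≤ N := by rw [← ha_eq]; exact husedN _ (Or.inl ⟨e1, he1E, rfl⟩)
          rw [← hea] at h1
          simp only [hfr] at h1
          omega
        · by_cases hA : ce e ∈ A
          · exfalso
            simp only [hce', if_neg hD, if_pos hA] at hea
            exact hac hea.symm
          · simp only [hce', if_neg hD, if_neg hA] at hea
            exact hea
      refine ⟨?_, haA⟩
      have := Set.ncard_le_ncard hsub (Set.toFinite _)
      exact le_trans h2 this

end Move


section M1

variable {V : Type*} {G : SimpleGraph V} {ce : Sym2 V → ℕ} {cv : V → ℕ}

lemma rel_symm {c : ℕ} : Symmetric (Rel G ce cv c) := by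
  rintro e f ⟨he, hf, h⟩
  refine ⟨hf, he, ?_⟩
  rcases h with h | ⟨w, hw⟩
  · exact Or.inl h.symm
  · exact Or.inr ⟨w, hw.1, hw.2.2, hw.2.1⟩

lemma support_incident {a b : V} (w : G.Walk a b) (hne : w.edges ≠ []) {z : V}
    (hz : z ∈ w.support) : ∃ e ∈ w.edges, z ∈ e := by
  induction w with
  | nil => simp at hne
  | @cons u x b h rest ih =>
    simp only [Walk.support_cons, List.mem_cons] at hz
    rcases hz with hz | hz
    · exact ⟨s(u, x), by simp, by simp [hz]⟩
    · cases rest with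
      | nil =>
        simp only [Walk.support_nil, List.mem_singleton] at hz
        exact ⟨s(u, x), by simp, by simp [hz]⟩
      | cons h2 rest2 =>
        obtain ⟨e, he, hze⟩ := ih (by simp) hz
        refine ⟨e, ?_, hze⟩
        simp only [Walk.edges_cons, List.mem_cons] at he ⊢
        tauto

/-- All edges of a good path of color `c` are pairwise related by chains. -/
lemma path_edges_rel {c : ℕ} {x y : V} (w : G.Walk x y) :
    w.IsPath → (∀ e ∈ w.edges, e ∈ Ec G ce c) →
    (∀ z ∈ w.support, z = x ∨ z = y ∨ cv z = c) →
    ∀ e ∈ w.edges, ∀ f ∈ w.edges, Relation.ReflTransGen (Rel G ce cv c) e f := by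
  induction w with
  | nil => simp
  | @cons u x2 b h rest ih =>
    intro hp hge hgs
    cases rest with
    | nil =>
      intro e he f hf
      simp only [Walk.edges_cons, Walk.edges_nil, List.mem_singleton] at he hf
      rw [he, hf]
    | @cons _ x3 _ h2 rest2 =>
      have hp2 : (Walk.cons h2 rest2).IsPath := hp.of_cons
      have hunotW : u ∉ (Walk.cons h2 rest2).support := ((Walk.cons_isPath_iff h _).mp hp).2
      have hx2c : cv x2 = c := by
        rcases hgs x2 (by simp) with h1 | h1 | h1
        · exact absurd (h1 ▸ (Walk.start_mem_support _)) hunotW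
        · exfalso
          have hnd := hp2.support_nodup
          have hsup : (Walk.cons h2 rest2).support = x2 :: rest2.support := by simp
          rw [hsup] at hnd
          have hx2not : x2 ∉ rest2.support := (List.nodup_cons.1 hnd).1
          have hb : b ∈ rest2.support := Walk.end_mem_support _
          exact hx2not (by rw [h1]; exact hb)
        · exact h1
      have hgeW : ∀ e ∈ (Walk.cons h2 rest2).edges, e ∈ Ec G ce c := by
        intro e he
        refine hge e ?_
        simp only [Walk.edges_cons, List.mem_cons] at he ⊢
        tauto
      have hgsW : ∀ z ∈ (Walk.cons h2 rest2).support, z = x2 ∨ z = b ∨ cv z = c := by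
        intro z hz
        rcases hgs z (by rw [Walk.support_cons]; exact List.mem_cons_of_mem _ hz)
          with h1 | h1 | h1
        · exact absurd (h1 ▸ hz) hunotW
        · exact Or.inr (Or.inl h1)
        · exact Or.inr (Or.inr h1)
      have ihW := ih hp2 hgeW hgsW
      have hrel : Rel G ce cv c s(u, x2) s(x2, x3) :=
        ⟨hge _ (by simp), hge _ (by simp), Or.inr ⟨x2, hx2c, by simp, by simp⟩⟩
      have hfirst : ∀ f ∈ (Walk.cons h2 rest2).edges,
          Relation.ReflTransGen (Rel G ce cv c) s(u, x2) f := by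
        intro f hf
        exact (Relation.ReflTransGen.single hrel).trans (ihW s(x2, x3) (by simp) f hf)
      intro e he f hf
      simp only [Walk.edges_cons, List.mem_cons] at he hf
      rcases he with he | he <;> rcases hf with hf | hf
      · rw [he, hf]
      · refine he ▸ hfirst f ?_
        simp only [Walk.edges_cons, List.mem_cons]; tauto
      · refine (@Relation.ReflTransGen.stdSymm _ _ ⟨fun a b h => rel_symm h⟩).symm _ _ (hf ▸ hfirst e ?_)
        simp only [Walk.edges_cons, List.mem_cons]; tauto
      · refine ihW e ?_ f ?_ <;> simp only [Walk.edges_cons, List.mem_cons] <;> tauto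

end M1


section Split

variable {V : Type*} [Fintype V] {G : SimpleGraph V} {ce : Sym2 V → ℕ} {cv : V → ℕ}

omit [Fintype V] in
lemma edges_ne_nil_of_ne {x y : V} (w : G.Walk x y) (hxy : x ≠ y) : w.edges ≠ [] := by
  cases w with
  | nil => exact absurd rfl hxy
  | cons h rest => simp

/-- In an extremal TMC-coloring, each color class of edges is chain-connected. -/
lemma class_connected (htmc : IsTMCColoring G ce cv) (hext : colorsUsed G ce cv = tmc G)
    {c : ℕ} {e f : Sym2 V} (he : e ∈ Ec G ce c) (hf : f ∈ Ec G ce c) :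
    Relation.ReflTransGen (Rel G ce cv c) e f := by
  classical
  by_contra hn
  obtain ⟨N, hN⟩ := (used_finite G ce cv).bddAbove
  set X : Set (Sym2 V) := {g | Relation.ReflTransGen (Rel G ce cv c) e g} with hX
  set ce' : Sym2 V → ℕ := fun g => if g ∈ Ec G ce c ∧ g ∉ X then N + 1 else ce g with hce'
  set cv' : V → ℕ :=
    fun v => if cv v = c ∧ (∃ g ∈ Ec G ce c, g ∉ X ∧ v ∈ g) then N + 1 else cv v with hcv'
  have hXcl : ∀ g ∈ X, ∀ g', Rel G ce cv c g g' → g' ∈ X :=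
    fun g hg g' hr => Relation.ReflTransGen.tail hg hr
  have heX : e ∈ X := Relation.ReflTransGen.refl
  have hfX : f ∉ X := hn
  have htmc' : IsTMCColoring G ce' cv' := by
    rw [isTMC_iff_linked]
    intro x y hxy
    obtain ⟨c₀, w0, hw0e, hw0s⟩ := (isTMC_iff_linked.1 htmc) x y hxy
    have hwe : ∀ e' ∈ w0.bypass.edges, ce e' = c₀ :=
      fun e' h => hw0e e' (w0.edges_bypass_subset h)
    have hws : ∀ z ∈ w0.bypass.support, z = x ∨ z = y ∨ cv z = c₀ :=
      fun z h => hw0s z (w0.support_bypass_subset h)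
    have hp : w0.bypass.IsPath := w0.bypass_isPath
    by_cases hcc : c₀ = c
    · subst hcc
      have hEc : ∀ e' ∈ w0.bypass.edges, e' ∈ Ec G ce c₀ :=
        fun e' h => ⟨w0.bypass.edges_subset_edgeSet h, hwe e' h⟩
      have hall := path_edges_rel w0.bypass hp hEc hws
      obtain ⟨g₀, hg₀⟩ := List.exists_mem_of_ne_nil _ (edges_ne_nil_of_ne w0.bypass hxy)
      by_cases hg₀X : g₀ ∈ X
      · refine ⟨c₀, w0.bypass, ?_, ?_⟩
        · intro g hg
          have hgX : g ∈ X := (hg₀X.trans (hall g₀ hg₀ g hg) : _)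
          have : ¬(g ∈ Ec G ce c₀ ∧ g ∉ X) := fun hco => hco.2 hgX
          simp only [hce', if_neg this]
          exact hwe g hg
        · intro z hz
          rcases hws z hz with h1 | h1 | h1
          · exact Or.inl h1
          · exact Or.inr (Or.inl h1)
          · right; right
            have hnc : ¬(cv z = c₀ ∧ (∃ g ∈ Ec G ce c₀, g ∉ X ∧ z ∈ g)) := by
              rintro ⟨-, g', hg'E, hg'X, hzg'⟩
              obtain ⟨gz, hgz, hzgz⟩ :=
                support_incident w0.bypass (edges_ne_nil_of_ne w0.bypass hxy) hz
              have hgzX : gz ∈ X := hg₀X.trans (hall g₀ hg₀ gz hgz)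
              exact hg'X (hXcl gz hgzX g' ⟨hEc gz hgz, hg'E, Or.inr ⟨z, h1, hzgz, hzg'⟩⟩)
            simp only [hcv', if_neg hnc]
            exact h1
      · refine ⟨N + 1, w0.bypass, ?_, ?_⟩
        · intro g hg
          have hgX : g ∉ X := by
            intro hgX
            exact hg₀X (hgX.trans (hall g hg g₀ hg₀))
          have hP : g ∈ Ec G ce c₀ ∧ g ∉ X := ⟨hEc g hg, hgX⟩
          simp only [hce', if_pos hP]
        · intro z hz
          rcases hws z hz with h1 | h1 | h1
          · exact Or.inl h1
          · exact Or.inr (Or.inl h1)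
          · right; right
            obtain ⟨gz, hgz, hzgz⟩ :=
              support_incident w0.bypass (edges_ne_nil_of_ne w0.bypass hxy) hz
            have hgzX : gz ∉ X := by
              intro hgzX
              exact hg₀X (hgzX.trans (hall gz hgz g₀ hg₀))
            have hP : cv z = c₀ ∧ ∃ g ∈ Ec G ce c₀, g ∉ X ∧ z ∈ g :=
              ⟨h1, gz, hEc gz hgz, hgzX, hzgz⟩
            simp only [hcv', if_pos hP]
    · refine ⟨c₀, w0.bypass, ?_, ?_⟩
      · intro g hg
        have h1 : ce g = c₀ := hwe g hg
        have : ¬(g ∈ Ec G ce c ∧ g ∉ X) := by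
          rintro ⟨⟨-, hgc⟩, -⟩
          exact hcc (h1.symm.trans hgc)
        simp only [hce', if_neg this]
        exact h1
      · intro z hz
        rcases hws z hz with h1 | h1 | h1
        · exact Or.inl h1
        · exact Or.inr (Or.inl h1)
        · right; right
          have : ¬(cv z = c ∧ (∃ g ∈ Ec G ce c, g ∉ X ∧ z ∈ g)) := by
            rintro ⟨hzc, -⟩
            exact hcc (h1.symm.trans hzc)
          simp only [hcv', if_neg this]
          exact h1
  -- counting: the new coloring uses strictly more colors
  have husedN : ∀ a ∈ used G ce cv, a ≤ N := fun a ha => hN ha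
  have hceused : c ∈ used G ce' cv' := by
    left
    refine ⟨e, he.1, ?_⟩
    have : ¬(e ∈ Ec G ce c ∧ e ∉ X) := fun hco => hco.2 heX
    simp only [hce', if_neg this]
    exact he.2
  have hsub : used G ce cv ∪ {N + 1} ⊆ used G ce' cv' := by
    rintro a (ha | ha)
    · by_cases hac : a = c
      · exact hac ▸ hceused
      rcases ha with ⟨g, hgE, hga⟩ | ⟨v, hva⟩
      · left
        refine ⟨g, hgE, ?_⟩
        have : ¬(g ∈ Ec G ce c ∧ g ∉ X) := by
          rintro ⟨⟨-, hgc⟩, -⟩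
          exact hac (hga ▸ hgc ▸ rfl)
        simp only [hce', if_neg this]
        exact hga
      · right
        refine ⟨v, ?_⟩
        have : ¬(cv v = c ∧ (∃ g ∈ Ec G ce c, g ∉ X ∧ v ∈ g)) := by
          rintro ⟨hvc, -⟩
          exact hac ((hva ▸ hvc : a = c))
        simp only [hcv', if_neg this]
        exact hva
    · simp only [Set.mem_singleton_iff] at ha
      subst ha
      left
      have hP : f ∈ Ec G ce c ∧ f ∉ X := ⟨hf, hfX⟩
      exact ⟨f, hf.1, by simp only [hce', if_pos hP]⟩
  have hnot : (N + 1) ∉ used G ce cv := fun h => by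
    have := husedN _ h; omega
  have hcard : (used G ce cv ∪ {N + 1}).ncard = (used G ce cv).ncard + 1 := by
    rw [Set.union_singleton]
    exact Set.ncard_insert_of_notMem hnot (used_finite G ce cv)
  have hge : (used G ce cv).ncard + 1 ≤ colorsUsed G ce' cv' := by
    rw [← hcard, colorsUsed_eq]
    exact Set.ncard_le_ncard hsub (used_finite G ce' cv')
  have hle : colorsUsed G ce' cv' ≤ tmc G := le_tmc htmc'
  have : colorsUsed G ce cv = (used G ce cv).ncard := rfl
  omega

end Split



section Assembly

variable {V : Type*} [Fintype V] {G : SimpleGraph V} {ce : Sym2 V → ℕ} {cv : V → ℕ}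

lemma heavy_decrease {S' S : Set ℕ} {A : Finset ℕ} {c d : ℕ}
    (h : S' ⊆ (S \ (A : Set ℕ)) ∪ {c}) (hcS : c ∈ S) (hdS : d ∈ S) (hdA : d ∈ A)
    (hcd : c ≠ d) (hS : S.Finite) : S'.ncard < S.ncard := by
  have hsub : S' ⊆ S \ {d} := by
    intro a ha
    rcases h ha with ⟨haS, haA⟩ | ha
    · exact ⟨haS, fun h1 => haA (by simp only [Set.mem_singleton_iff] at h1; exact h1 ▸ hdA)⟩
    · simp only [Set.mem_singleton_iff] at ha
      exact ⟨ha ▸ hcS, fun h1 => hcd (by simp only [Set.mem_singleton_iff] at h1; exact ha.symm.trans h1)⟩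
  calc S'.ncard ≤ (S \ {d}).ncard := Set.ncard_le_ncard hsub hS.diff
    _ < S.ncard := Set.ncard_diff_singleton_lt_of_mem hdS hS

lemma chain_step {α : Type*} {r : α → α → Prop} {a b : α}
    (h : Relation.ReflTransGen r a b) : a ≠ b → ∃ x y, r x y ∧ x ≠ y := by
  induction h with
  | refl => exact fun h => absurd rfl h
  | tail hchain hr ih =>
    intro hne
    rename_i b₀ b₁
    by_cases h0 : b₀ = b₁
    · exact ih (h0 ▸ hne)
    · exact ⟨b₀, b₁, hr, h0⟩

/-- In an extremal coloring, a color with two edges has an internal vertex. -/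
lemma exists_internal (htmc : IsTMCColoring G ce cv) (hext : colorsUsed G ce cv = tmc G)
    {c : ℕ} (hc : 2 ≤ (Ec G ce c).ncard) : ∃ p, cv p = c ∧ p ∈ Vt G ce c := by
  have h1 : 1 < (Ec G ce c).ncard := hc
  obtain ⟨e1, he1, e2, he2, hne⟩ := (Set.one_lt_ncard (Set.toFinite _)).1 h1
  obtain ⟨g, g', hr, hgg'⟩ := chain_step (class_connected htmc hext he1 he2) hne
  rcases hr.2.2 with h | ⟨w, hwc, hwg, -⟩
  · exact absurd h hgg'
  · exact ⟨w, hwc, mem_Vt.2 ⟨g, hr.1, hwg⟩⟩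

omit [Fintype V] in
/-- Reverse a walk keeping the goodness data. -/
lemma walk_reverse_props {a b : V} {w : G.Walk a b} {PE : Sym2 V → Prop} {PV : V → Prop}
    (he : ∀ e ∈ w.edges, PE e) (hs : ∀ z ∈ w.support, z = a ∨ z = b ∨ PV z) :
    (∀ e ∈ w.reverse.edges, PE e) ∧ (∀ z ∈ w.reverse.support, z = b ∨ z = a ∨ PV z) := by
  constructor
  · intro e hee
    rw [Walk.edges_reverse, List.mem_reverse] at hee
    exact he e hee
  · intro z hz
    rw [Walk.support_reverse, List.mem_reverse] at hz
    rcases hs z hz with h | h | h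
    · exact Or.inr (Or.inl h)
    · exact Or.inl h
    · exact Or.inr (Or.inr h)

/-- Merge two color classes along a removable edge. -/
lemma pair_move (htmc : IsTMCColoring G ce cv) (hext : colorsUsed G ce cv = tmc G)
    {c d : ℕ} (hcd : c ≠ d) (hcE : (Ec G ce c).Nonempty)
    {e₀ : Sym2 V} (he₀ : e₀ ∈ Ec G ce d)
    (det : ∀ a b : V, s(a, b) = e₀ → ∃ w : G.Walk a b,
      (∀ e ∈ w.edges, (ce e = c ∨ ce e = d) ∧ e ≠ e₀) ∧
      (∀ z ∈ w.support, z = a ∨ z = b ∨ cv z = c ∨ cv z = d)) :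
    ∃ (ce' : Sym2 V → ℕ) (cv' : V → ℕ), IsTMCColoring G ce' cv' ∧
      colorsUsed G ce' cv' = tmc G ∧
      heavy G ce' ⊆ (heavy G ce \ (({c, d} : Finset ℕ) : Set ℕ)) ∪ {c} := by
  classical
  have hmemA : ∀ x : ℕ, x ∈ ({c, d} : Finset ℕ) ↔ (x = c ∨ x = d) := by
    intro x; simp
  refine move htmc hext {c, d} c (by simp) {e₀} ?_ ?_ ?_ ?_ ?_ ?_
  · intro e he; simp only [Finset.mem_singleton] at he; exact he ▸ he₀.1
  · intro e he; simp only [Finset.mem_singleton] at he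
    rw [(hmemA _)]
    exact Or.inr (he ▸ he₀.2)
  · intro e he; simp only [Finset.mem_singleton] at he
    rw [he, he₀.2]; exact fun h => hcd h.symm
  · obtain ⟨e1, he1⟩ := hcE; exact ⟨e1, he1.1, he1.2⟩
  · rw [Finset.card_singleton]
    rw [Finset.card_insert_of_notMem (by simp [hcd]), Finset.card_singleton]
  · intro a b hab
    simp only [Finset.mem_singleton] at hab
    obtain ⟨w, hwe, hws⟩ := det a b hab
    refine ⟨w, ?_, ?_⟩
    · intro e he
      refine ⟨?_, ?_⟩
      · have := (hwe e he).1
        simp only [Finset.coe_insert, Finset.coe_singleton, Set.mem_insert_iff,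
          Set.mem_singleton_iff]
        exact this
      · simp only [Finset.coe_singleton, Set.mem_singleton_iff]
        exact (hwe e he).2
    · intro z hz
      rcases hws z hz with h | h | h | h
      · exact Or.inl h
      · exact Or.inr (Or.inl h)
      · refine Or.inr (Or.inr ?_)
        simp only [Finset.coe_insert, Finset.coe_singleton, Set.mem_insert_iff,
          Set.mem_singleton_iff]
        exact Or.inl h
      · refine Or.inr (Or.inr ?_)
        simp only [Finset.coe_insert, Finset.coe_singleton, Set.mem_insert_iff,
          Set.mem_singleton_iff]
        exact Or.inr h

/-- Walks within a color class between touched vertices. -/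
lemma walkIn (htmc : IsTMCColoring G ce cv) (hext : colorsUsed G ce cv = tmc G)
    (x : ℕ) {a b : V} (ha : a ∈ Vt G ce x) (hb : b ∈ Vt G ce x) :
    ∃ w : G.Walk a b, (∀ e' ∈ w.edges, e' ∈ Ec G ce x) ∧
      (∀ z ∈ w.support, z = a ∨ z = b ∨ cv z = x) := by
  obtain ⟨ea, heaE, haea⟩ := mem_Vt.1 ha
  obtain ⟨eb, hebE, hbeb⟩ := mem_Vt.1 hb
  exact chain_walk (class_connected htmc hext heaE hebE) heaE haea hebE hbeb

/-- The two-class merge at a shared pair, one of which is internal. -/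
lemma caseA (htmc : IsTMCColoring G ce cv) (hext : colorsUsed G ce cv = tmc G)
    {c d : ℕ} (hcd : c ≠ d) (hcE : (Ec G ce c).Nonempty)
    {w₀ v₀ : V} (hne : v₀ ≠ w₀)
    (hw₀c : w₀ ∈ Vt G ce c) (hv₀c : v₀ ∈ Vt G ce c)
    (hw₀d : w₀ ∈ Vt G ce d) (hv₀d : v₀ ∈ Vt G ce d)
    (hcvw₀ : cv w₀ = c) :
    ∃ (ce' : Sym2 V → ℕ) (cv' : V → ℕ), IsTMCColoring G ce' cv' ∧
      colorsUsed G ce' cv' = tmc G ∧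
      heavy G ce' ⊆ (heavy G ce \ (({c, d} : Finset ℕ) : Set ℕ)) ∪ {c} := by
  classical
  obtain ⟨wd0, hwd0e, hwd0s⟩ := walkIn htmc hext d hv₀d hw₀d
  -- pass to the underlying path
  have hpe : ∀ e' ∈ wd0.bypass.edges, e' ∈ Ec G ce d :=
    fun e' h => hwd0e e' (wd0.edges_bypass_subset h)
  have hps : ∀ z ∈ wd0.bypass.support, z = v₀ ∨ z = w₀ ∨ cv z = d :=
    fun z h => hwd0s z (wd0.support_bypass_subset h)
  have hp : wd0.bypass.IsPath := wd0.bypass_isPath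
  -- decompose the first edge
  cases hw : wd0.bypass with
  | nil => exact absurd rfl hne
  | @cons _ r _ hadj rest =>
    rw [hw] at hpe hps hp
    have he₀ : s(v₀, r) ∈ Ec G ce d := hpe _ (by simp)
    have hrestE : ∀ e ∈ rest.edges, e ∈ Ec G ce d := by
      intro e he
      refine hpe e ?_
      simp only [Walk.edges_cons, List.mem_cons]
      exact Or.inr he
    have hrestne : s(v₀, r) ∉ rest.edges := by
      have hnd := hp.isTrail.edges_nodup
      simp only [Walk.edges_cons] at hnd
      exact (List.nodup_cons.1 hnd).1
    have hv₀notrest : v₀ ∉ rest.support := ((Walk.cons_isPath_iff hadj rest).1 hp).2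
    have hrestS : ∀ z ∈ rest.support, z = r ∨ z = w₀ ∨ cv z = d := by
      intro z hz
      rcases hps z (by simp only [Walk.support_cons, List.mem_cons]; exact Or.inr hz)
        with h | h | h
      · exact absurd (h ▸ hz) hv₀notrest
      · exact Or.inr (Or.inl h)
      · exact Or.inr (Or.inr h)
    obtain ⟨qc, hqce, hqcs⟩ := walkIn htmc hext c hv₀c hw₀c
    -- the detour from v₀ to r
    have hdet : ∃ w : G.Walk v₀ r,
        (∀ e ∈ w.edges, (ce e = c ∨ ce e = d) ∧ e ≠ s(v₀, r)) ∧
        (∀ z ∈ w.support, z = v₀ ∨ z = r ∨ cv z = c ∨ cv z = d) := by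
      obtain ⟨hrevE, hrevS⟩ := walk_reverse_props
        (PE := fun e => e ∈ Ec G ce d ∧ e ≠ s(v₀, r)) (PV := fun z => cv z = d)
        (w := rest)
        (fun e he => ⟨hrestE e he, fun h0 => hrestne (h0 ▸ he)⟩)
        (fun z hz => hrestS z hz)
      refine ⟨qc.append rest.reverse, ?_, ?_⟩
      · intro e he
        rw [Walk.edges_append] at he
        rcases List.mem_append.1 he with h1 | h1
        · have h2 := hqce e h1
          exact ⟨Or.inl h2.2, fun h0 => hcd (by rw [← h2.2, h0, he₀.2])⟩
        · exact ⟨Or.inr (hrevE e h1).1.2, (hrevE e h1).2⟩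
      · intro z hz
        rw [Walk.support_append] at hz
        rcases List.mem_append.1 hz with h1 | h1
        · rcases hqcs z h1 with h | h | h
          · exact Or.inl h
          · exact Or.inr (Or.inr (Or.inl (h ▸ hcvw₀)))
          · exact Or.inr (Or.inr (Or.inl h))
        · rcases hrevS z (List.mem_of_mem_tail h1) with h | h | h
          · exact Or.inr (Or.inr (Or.inl (h ▸ hcvw₀)))
          · exact Or.inr (Or.inl h)
          · exact Or.inr (Or.inr (Or.inr h))
    obtain ⟨wdet, hdetE, hdetS⟩ := hdet
    refine pair_move htmc hext hcd hcE he₀ ?_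
    intro a b hab
    rcases Sym2.eq_iff.1 hab with ⟨ha, hb⟩ | ⟨ha, hb⟩
    · subst ha; subst hb
      exact ⟨wdet, hdetE, hdetS⟩
    · subst ha; subst hb
      obtain ⟨hrE, hrS⟩ := walk_reverse_props
        (PE := fun e => (ce e = c ∨ ce e = d) ∧ e ≠ s(b, a))
        (PV := fun z => cv z = c ∨ cv z = d) (w := wdet)
        (fun e he => hdetE e he)
        (fun z hz => by
          rcases hdetS z hz with h | h | h | h
          · exact Or.inl h
          · exact Or.inr (Or.inl h)
          · exact Or.inr (Or.inr (Or.inl h))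
          · exact Or.inr (Or.inr (Or.inr h)))
      refine ⟨wdet.reverse, ?_, ?_⟩
      · intro e he
        refine ⟨(hrE e he).1, fun h0 => (hrE e he).2 (by rw [h0, Sym2.eq_swap])⟩
      · intro z hz
        rcases hrS z hz with h | h | h
        · exact Or.inl h
        · exact Or.inr (Or.inl h)
        · exact Or.inr (Or.inr h)

end Assembly





section Triple

variable {V : Type*} [Fintype V] {G : SimpleGraph V} {ce : Sym2 V → ℕ} {cv : V → ℕ}

lemma tripleMove (htmc : IsTMCColoring G ce cv) (hext : colorsUsed G ce cv = tmc G)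
    {c d y : ℕ} (hcd : c ≠ d) (hcy : c ≠ y) (hdy : d ≠ y)
    (hcE : (Ec G ce c).Nonempty)
    {u v p q : V} (huv : u ≠ v)
    (hu_d : u ∈ Vt G ce d) (hv_d : v ∈ Vt G ce d)
    (hcvu_c : cv u ≠ c) (hcvu_d : cv u ≠ d) (hcvv_c : cv v ≠ c) (hcvv_d : cv v ≠ d)
    (hu_c : u ∈ Vt G ce c) (hv_c : v ∈ Vt G ce c)
    (hB0 : s(u, v) ∉ Ec G ce d)
    (hpc : cv p = c) (hp_c : p ∈ Vt G ce c) (hp_y : p ∈ Vt G ce y)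
    (hqd : cv q = d) (hq_d : q ∈ Vt G ce d) (hq_y : q ∈ Vt G ce y) :
    ∃ (ce' : Sym2 V → ℕ) (cv' : V → ℕ), IsTMCColoring G ce' cv' ∧
      colorsUsed G ce' cv' = tmc G ∧
      heavy G ce' ⊆ (heavy G ce \ (({c, d, y} : Finset ℕ) : Set ℕ)) ∪ {c} := by
  classical
  obtain ⟨eu, heu, hueu⟩ := mem_Vt.1 hu_d
  obtain ⟨ev, hev, hvev⟩ := mem_Vt.1 hv_d
  obtain ⟨ru, hru⟩ := Sym2.mem_iff_exists.1 hueu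
  obtain ⟨rv, hrv⟩ := Sym2.mem_iff_exists.1 hvev
  have heu' : eu ∈ Ec G ce d := heu
  have hev' : ev ∈ Ec G ce d := hev
  have huru : u ≠ ru := by
    intro h
    exact G.not_isDiag_of_mem_edgeSet (hru ▸ heu.1) (by rw [← h]; simp)
  have hvrv : v ≠ rv := by
    intro h
    exact G.not_isDiag_of_mem_edgeSet (hrv ▸ hev.1) (by rw [← h]; simp)
  have hvru : v ≠ ru := by
    intro h
    apply hB0
    have : eu = s(u, v) := by rw [hru, h]
    exact this ▸ heu
  have hurv : u ≠ rv := by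
    intro h
    apply hB0
    have : ev = s(u, v) := by rw [hrv, ← h]; rw [Sym2.eq_swap]
    exact this ▸ hev
  have heuv : eu ≠ ev := by
    intro h
    apply hB0
    have hveu : v ∈ eu := h ▸ hvev
    exact (sym2_eq_of_mem hueu hveu huv) ▸ heu
  set D : Finset (Sym2 V) := {eu, ev} with hD
  set A : Finset ℕ := {c, d, y} with hA
  have hAmem : ∀ x : ℕ, x ∈ (A : Set ℕ) ↔ (x = c ∨ x = d ∨ x = y) := by
    intro x; simp [hA]
  have hDmem : ∀ e : Sym2 V, e ∈ (D : Set (Sym2 V)) ↔ (e = eu ∨ e = ev) := by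
    intro e; simp [hD]
  -- generic detour builder
  have build : ∀ (w rw : V) (ew : Sym2 V), ew = s(w, rw) → ew ∈ Ec G ce d →
      w ∈ Vt G ce c → u ≠ rw → v ≠ rw →
      ∃ wk : G.Walk w rw,
        (∀ e ∈ wk.edges, ce e ∈ (A : Set ℕ) ∧ e ∉ (D : Set (Sym2 V))) ∧
        (∀ z ∈ wk.support, z = w ∨ z = rw ∨ cv z ∈ (A : Set ℕ)) := by
    intro w rw ew hew hewd hw_c hurw hvrw
    have hrw_d : rw ∈ Vt G ce d := mem_Vt.2 ⟨ew, hewd, by rw [hew]; simp⟩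
    obtain ⟨s1, hs1e, hs1s⟩ := walkIn htmc hext c hw_c hp_c
    obtain ⟨s2, hs2e, hs2s⟩ := walkIn htmc hext y hp_y hq_y
    obtain ⟨s3w, hs3we, hs3ws⟩ := walkIn htmc hext d hq_d hrw_d
    have hs3e : ∀ e ∈ s3w.bypass.edges, e ∈ Ec G ce d :=
      fun e he => hs3we e (s3w.edges_bypass_subset he)
    have hs3s : ∀ z ∈ s3w.bypass.support, z = q ∨ z = rw ∨ cv z = d :=
      fun z hz => hs3ws z (s3w.support_bypass_subset hz)
    have havoid : ∀ e ∈ s3w.bypass.edges, e ∉ (D : Set (Sym2 V)) := by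
      intro e he hDe
      rcases (hDmem e).1 hDe with rfl | rfl
      · have hu_sup : u ∈ s3w.bypass.support := by
          rw [hru] at he
          exact s3w.bypass.fst_mem_support_of_mem_edges he
        rcases hs3s u hu_sup with h | h | h
        · exact hcvu_d (h ▸ hqd)
        · exact hurw h
        · exact hcvu_d h
      · have hv_sup : v ∈ s3w.bypass.support := by
          rw [hrv] at he
          exact s3w.bypass.fst_mem_support_of_mem_edges he
        rcases hs3s v hv_sup with h | h | h
        · exact hcvv_d (h ▸ hqd)
        · exact hvrw h
        · exact hcvv_d h
    refine ⟨s1.append (s2.append s3w.bypass), ?_, ?_⟩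
    · intro e he
      rw [Walk.edges_append] at he
      rcases List.mem_append.1 he with h1 | h1
      · have h2 := (hs1e e h1).2
        refine ⟨(hAmem _).2 (Or.inl h2), ?_⟩
        intro hDe
        rcases (hDmem e).1 hDe with rfl | rfl
        · exact hcd (h2.symm.trans heu'.2)
        · exact hcd (h2.symm.trans hev'.2)
      · rw [Walk.edges_append] at h1
        rcases List.mem_append.1 h1 with h2 | h2
        · have h3 := (hs2e e h2).2
          refine ⟨(hAmem _).2 (Or.inr (Or.inr h3)), ?_⟩
          intro hDe
          rcases (hDmem e).1 hDe with rfl | rfl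
          · exact hdy (heu'.2.symm.trans h3)
          · exact hdy (hev'.2.symm.trans h3)
        · exact ⟨(hAmem _).2 (Or.inr (Or.inl (hs3e e h2).2)), havoid e h2⟩
    · intro z hz
      rw [Walk.support_append] at hz
      rcases List.mem_append.1 hz with h1 | h1
      · rcases hs1s z h1 with h | h | h
        · exact Or.inl h
        · exact Or.inr (Or.inr ((hAmem _).2 (Or.inl (h ▸ hpc))))
        · exact Or.inr (Or.inr ((hAmem _).2 (Or.inl h)))
      · have h1' := List.mem_of_mem_tail h1
        rw [Walk.support_append] at h1'
        rcases List.mem_append.1 h1' with h2 | h2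
        · rcases hs2s z h2 with h | h | h
          · exact Or.inr (Or.inr ((hAmem _).2 (Or.inl (h ▸ hpc))))
          · exact Or.inr (Or.inr ((hAmem _).2 (Or.inr (Or.inl (h ▸ hqd)))))
          · exact Or.inr (Or.inr ((hAmem _).2 (Or.inr (Or.inr h))))
        · rcases hs3s z (List.mem_of_mem_tail h2) with h | h | h
          · exact Or.inr (Or.inr ((hAmem _).2 (Or.inr (Or.inl (h ▸ hqd)))))
          · exact Or.inr (Or.inl h)
          · exact Or.inr (Or.inr ((hAmem _).2 (Or.inr (Or.inl h))))
  -- apply the move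
  refine move htmc hext A c (by simp [hA]) D ?_ ?_ ?_ ?_ ?_ ?_
  · intro e he
    rcases (hDmem e).1 (by exact_mod_cast he) with rfl | rfl
    · exact heu'.1
    · exact hev'.1
  · intro e he
    rcases (hDmem e).1 (by exact_mod_cast he) with rfl | rfl
    · rw [heu'.2]; simp [hA]
    · rw [hev'.2]; simp [hA]
  · intro e he
    rcases (hDmem e).1 (by exact_mod_cast he) with rfl | rfl
    · rw [heu'.2]; exact fun h => hcd h.symm
    · rw [hev'.2]; exact fun h => hcd h.symm
  · obtain ⟨e1, he1⟩ := hcE; exact ⟨e1, he1.1, he1.2⟩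
  · have hAcard : A.card = 3 := by
      rw [hA]
      rw [Finset.card_insert_of_notMem (by simp [hcd, hcy]),
        Finset.card_insert_of_notMem (by simp [hdy]), Finset.card_singleton]
    have hDcard : D.card = 2 := by
      rw [hD]
      rw [Finset.card_insert_of_notMem (by simp [heuv]), Finset.card_singleton]
    omega
  · intro a b hab
    rcases (hDmem _).1 (by exact_mod_cast hab) with h | h
    · rw [hru] at h
      rcases Sym2.eq_iff.1 h with ⟨ha, hb⟩ | ⟨ha, hb⟩
      · subst ha; subst hb
        exact build a b eu hru heu' hu_c huru hvru
      · subst ha; subst hb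
        obtain ⟨wk, hwke, hwks⟩ := build b a eu hru heu' hu_c huru hvru
        obtain ⟨hrE, hrS⟩ := walk_reverse_props (w := wk)
          (PE := fun e => ce e ∈ (A : Set ℕ) ∧ e ∉ (D : Set (Sym2 V)))
          (PV := fun z => cv z ∈ (A : Set ℕ)) hwke hwks
        exact ⟨wk.reverse, hrE, hrS⟩
    · rw [hrv] at h
      rcases Sym2.eq_iff.1 h with ⟨ha, hb⟩ | ⟨ha, hb⟩
      · subst ha; subst hb
        exact build a b ev hrv hev' hv_c hurv hvrv
      · subst ha; subst hb
        obtain ⟨wk, hwke, hwks⟩ := build b a ev hrv hev' hv_c hurv hvrv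
        obtain ⟨hrE, hrS⟩ := walk_reverse_props (w := wk)
          (PE := fun e => ce e ∈ (A : Set ℕ) ∧ e ∉ (D : Set (Sym2 V)))
          (PV := fun z => cv z ∈ (A : Set ℕ)) hwke hwks
        exact ⟨wk.reverse, hrE, hrS⟩

end Triple



section Main

variable {V : Type*} [Fintype V] {G : SimpleGraph V} {ce : Sym2 V → ℕ} {cv : V → ℕ}

/-- A straight detour within one color class, for a removable edge of another color. -/
lemma straight_det (htmc : IsTMCColoring G ce cv) (hext : colorsUsed G ce cv = tmc G)
    {x x' : ℕ} (hxx' : x ≠ x') {u v : V} (hu : u ∈ Vt G ce x) (hv : v ∈ Vt G ce x)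
    {e₀ : Sym2 V} (he₀ : e₀ ∈ Ec G ce x') :
    ∀ a b : V, s(a, b) = s(u, v) → ∃ w : G.Walk a b,
      (∀ e ∈ w.edges, (ce e = x ∨ ce e = x') ∧ e ≠ e₀) ∧
      (∀ z ∈ w.support, z = a ∨ z = b ∨ cv z = x ∨ cv z = x') := by
  obtain ⟨qc, hqce, hqcs⟩ := walkIn htmc hext x hu hv
  have hq : ∃ w : G.Walk u v,
      (∀ e ∈ w.edges, (ce e = x ∨ ce e = x') ∧ e ≠ e₀) ∧
      (∀ z ∈ w.support, z = u ∨ z = v ∨ cv z = x ∨ cv z = x') := by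
    refine ⟨qc, ?_, ?_⟩
    · intro e he
      refine ⟨Or.inl (hqce e he).2, ?_⟩
      intro h0
      exact hxx' (by rw [← (hqce e he).2, h0, he₀.2])
    · intro z hz
      rcases hqcs z hz with h | h | h
      · exact Or.inl h
      · exact Or.inr (Or.inl h)
      · exact Or.inr (Or.inr (Or.inl h))
  obtain ⟨w0, hw0e, hw0s⟩ := hq
  intro a b hab
  rcases Sym2.eq_iff.1 hab with ⟨ha, hb⟩ | ⟨ha, hb⟩
  · subst ha; subst hb
    exact ⟨w0, hw0e, hw0s⟩
  · subst ha; subst hb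
    obtain ⟨hrE, hrS⟩ := walk_reverse_props (w := w0)
      (PE := fun e => (ce e = x ∨ ce e = x') ∧ e ≠ e₀)
      (PV := fun z => cv z = x ∨ cv z = x') hw0e
      (fun z hz => by
        rcases hw0s z hz with h | h | h | h
        · exact Or.inl h
        · exact Or.inr (Or.inl h)
        · exact Or.inr (Or.inr (Or.inl h))
        · exact Or.inr (Or.inr (Or.inr h)))
    refine ⟨w0.reverse, hrE, ?_⟩
    intro z hz
    rcases hrS z hz with h | h | h
    · exact Or.inl h
    · exact Or.inr (Or.inl h)
    · rcases h with h | h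
      · exact Or.inr (Or.inr (Or.inl h))
      · exact Or.inr (Or.inr (Or.inr h))

end Main

end TMC

theorem stmt10 {V : Type*} [Fintype V] (G : SimpleGraph V) (hG : G.Connected) :
    ∃ (ce : Sym2 V → ℕ) (cv : V → ℕ), IsTMCColoring G ce cv ∧
      colorsUsed G ce cv = tmc G ∧
      ∀ c d : ℕ, c ≠ d →
        2 ≤ {e ∈ G.edgeSet | ce e = c}.ncard →
        2 ≤ {e ∈ G.edgeSet | ce e = d}.ncard →
        ({v : V | ∃ e ∈ G.edgeSet, ce e = c ∧ v ∈ e} ∩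
          {v : V | ∃ e ∈ G.edgeSet, ce e = d ∧ v ∈ e}).ncard ≤ 1 := by
  classical
  set M : Set ℕ := {n | ∃ ce cv, IsTMCColoring G ce cv ∧ colorsUsed G ce cv = tmc G ∧
    (TMC.heavy G ce).ncard = n} with hM
  have hMne : M.Nonempty := by
    obtain ⟨ce, cv, h1, h2⟩ := TMC.tmc_mem hG
    exact ⟨(TMC.heavy G ce).ncard, ce, cv, h1, h2, rfl⟩
  obtain ⟨ce, cv, htmc, hext, hmin⟩ := Nat.sInf_mem hMne
  refine ⟨ce, cv, htmc, hext, ?_⟩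
  intro c d hcd hc hd
  by_contra hcon
  push_neg at hcon
  obtain ⟨u, hu, v, hv, huv⟩ := (Set.one_lt_ncard (Set.toFinite _)).1 hcon
  have hc' : 2 ≤ (TMC.Ec G ce c).ncard := hc
  have hd' : 2 ≤ (TMC.Ec G ce d).ncard := hd
  have hu_c : u ∈ TMC.Vt G ce c := hu.1
  have hu_d : u ∈ TMC.Vt G ce d := hu.2
  have hv_c : v ∈ TMC.Vt G ce c := hv.1
  have hv_d : v ∈ TMC.Vt G ce d := hv.2
  have hcH : c ∈ TMC.heavy G ce := hc'
  have hdH : d ∈ TMC.heavy G ce := hd'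
  have hheavyfin : (TMC.heavy G ce).Finite :=
    Set.Finite.subset ((Set.toFinite G.edgeSet).image ce) TMC.heavy_subset_image
  have hcE : (TMC.Ec G ce c).Nonempty := TMC.ncard_two_nonempty hc'
  have hdE : (TMC.Ec G ce d).Nonempty := TMC.ncard_two_nonempty hd'
  have hfin : ∀ (A : Finset ℕ) (tgt oth : ℕ), tgt ∈ TMC.heavy G ce →
      oth ∈ TMC.heavy G ce → oth ∈ A → tgt ≠ oth →
      (∃ ce' cv', IsTMCColoring G ce' cv' ∧ colorsUsed G ce' cv' = tmc G ∧
        TMC.heavy G ce' ⊆ (TMC.heavy G ce \ (A : Set ℕ)) ∪ {tgt}) → False := by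
    rintro A tgt oth htgt hoth hothA htne ⟨ce', cv', h1, h2, h3⟩
    have hlt := TMC.heavy_decrease h3 htgt hoth hothA htne hheavyfin
    have hle : sInf M ≤ (TMC.heavy G ce').ncard := Nat.sInf_le ⟨ce', cv', h1, h2, rfl⟩
    omega
  by_cases h1 : cv u = c
  · exact hfin {c, d} c d hcH hdH (by simp) hcd
      (TMC.caseA htmc hext hcd hcE huv.symm hu_c hv_c hu_d hv_d h1)
  by_cases h2 : cv u = d
  · exact hfin {d, c} d c hdH hcH (by simp) hcd.symm
      (TMC.caseA htmc hext hcd.symm hdE huv.symm hu_d hv_d hu_c hv_c h2)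
  by_cases h3 : cv v = c
  · exact hfin {c, d} c d hcH hdH (by simp) hcd
      (TMC.caseA htmc hext hcd hcE huv hv_c hu_c hv_d hu_d h3)
  by_cases h4 : cv v = d
  · exact hfin {d, c} d c hdH hcH (by simp) hcd.symm
      (TMC.caseA htmc hext hcd.symm hdE huv hv_d hu_d hv_c hu_c h4)
  by_cases h5 : s(u, v) ∈ TMC.Ec G ce d
  · exact hfin {c, d} c d hcH hdH (by simp) hcd
      (TMC.pair_move htmc hext hcd hcE h5
        (TMC.straight_det htmc hext hcd hu_c hv_c h5))
  by_cases h6 : s(u, v) ∈ TMC.Ec G ce c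
  · exact hfin {d, c} d c hdH hcH (by simp) hcd.symm
      (TMC.pair_move htmc hext hcd.symm hdE h6
        (TMC.straight_det htmc hext hcd.symm hu_d hv_d h6))
  obtain ⟨p, hpc, hp_c⟩ := TMC.exists_internal htmc hext hc'
  obtain ⟨q, hqd, hq_d⟩ := TMC.exists_internal htmc hext hd'
  by_cases h7 : p ∈ TMC.Vt G ce d
  · have hne : u ≠ p := fun h => h1 (h ▸ hpc ▸ rfl)
    exact hfin {c, d} c d hcH hdH (by simp) hcd
      (TMC.caseA htmc hext hcd hcE hne hp_c hu_c h7 hu_d hpc)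
  by_cases h8 : q ∈ TMC.Vt G ce c
  · have hne : u ≠ q := fun h => h2 (h ▸ hqd ▸ rfl)
    exact hfin {d, c} d c hdH hcH (by simp) hcd.symm
      (TMC.caseA htmc hext hcd.symm hdE hne hq_d hu_d h8 hu_c hqd)
  have hpq : p ≠ q := fun h => hcd (by rw [← hpc, h, hqd])
  obtain ⟨y, hp_y, hq_y⟩ : ∃ y, p ∈ TMC.Vt G ce y ∧ q ∈ TMC.Vt G ce y := by
    by_cases hadj : G.Adj p q
    · refine ⟨ce s(p, q), ⟨s(p, q), hadj, rfl, by simp⟩, ⟨s(p, q), hadj, rfl, by simp⟩⟩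
    · obtain ⟨y, w, hwe, hws⟩ := (TMC.isTMC_iff_linked.1 htmc) p q hpq
      have hnn := TMC.edges_ne_nil_of_ne w hpq
      obtain ⟨ep, hep, hpep⟩ := TMC.support_incident w hnn (Walk.start_mem_support w)
      obtain ⟨eq', heq', hqeq⟩ := TMC.support_incident w hnn (Walk.end_mem_support w)
      exact ⟨y, ⟨ep, w.edges_subset_edgeSet hep, hwe ep hep, hpep⟩,
        ⟨eq', w.edges_subset_edgeSet heq', hwe eq' heq', hqeq⟩⟩
  have hyc : c ≠ y := by
    intro h
    exact h8 (h ▸ hq_y)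
  have hyd : d ≠ y := by
    intro h
    exact h7 (h ▸ hp_y)
  exact hfin {c, d, y} c d hcH hdH (by simp) hcd
    (TMC.tripleMove htmc hext hcd hyc hyd hcE huv hu_d hv_d h1 h2 h3 h4 hu_c hv_c h5
      hpc hp_c hp_y hqd hq_d hq_y)
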